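/- For every killing rate κ with 0 < κ < 1 and every integer N ≥ 1 with Nκ ≥ 1/2, the tail of the Green's function series satisfies Σ_{n=N+1}^∞ (4+κ)^{−2n} W_{2n}^{o,o} ≤ 4 e^{−Nκ/4}. -/

import Mathlib

open scoped Real

/-- Graph (L¹) distance of `x ∈ ℤ²` from the origin: `|x₁| + |x₂|`. -/
def gnorm (x : ℤ × ℤ) : ℕ := x.1.natAbs + x.2.natAbs

/-- `W n x` is the number of nearest-neighbour walks of length `n` in `ℤ²`
from the origin `o = (0,0)` to `x`, i.e. the number of sequences
`(v₀, …, v_n)` with `v₀ = o`, `v_n = x` and `|v_{i+1} − v_i| = 1` for all `i`. -/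
noncomputable def W (n : ℕ) (x : ℤ × ℤ) : ℕ :=
  Set.ncard {v : Fin (n + 1) → ℤ × ℤ |
    v 0 = (0, 0) ∧ v (Fin.last n) = x ∧
    ∀ i : Fin n, gnorm (v i.succ - v i.castSucc) = 1}

/-- The Green's function `G^{o,x}` of the simple random walk on `ℤ²` with
killing rate `κ`: `G κ x = Σ_{n≥0} (4+κ)^{-n} W_n^{o,x}`. -/
noncomputable def G (κ : ℝ) (x : ℤ × ℤ) : ℝ :=
  ∑' n : ℕ, (1 / (4 + κ)) ^ n * (W n x : ℝ)

/-- Lemma 3.4, eq. (3.11): tail bound for the Green's function series when `Nκ ≥ 1/2`. -/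
lemma gnorm_one_iff (s : ℤ × ℤ) : gnorm s = 1 ↔
    (s.1 + s.2 = 1 ∨ s.1 + s.2 = -1) ∧ (s.1 - s.2 = 1 ∨ s.1 - s.2 = -1) := by
  unfold gnorm; omega

lemma telescope {M : Type*} [AddCommGroup M] :
    ∀ (n : ℕ) (φ : Fin (n+1) → M),
    ∑ i : Fin n, (φ i.succ - φ i.castSucc) = φ (Fin.last n) - φ 0 := by
  intro n
  induction n with
  | zero => intro φ; simp
  | succ n ih =>
    intro φ
    rw [Fin.sum_univ_castSucc]
    have h1 : ∀ i : Fin n, (φ i.castSucc.succ - φ i.castSucc.castSucc)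
        = ((φ ∘ Fin.castSucc) i.succ - (φ ∘ Fin.castSucc) i.castSucc) := by
      intro i; rfl
    rw [Finset.sum_congr rfl (fun i _ => h1 i), ih (φ ∘ Fin.castSucc)]
    simp [Fin.succ_last]

section count
variable (m : ℕ)

open Finset in
/-- key filter-card lemma -/
lemma card_filter_eq (n : ℕ) (v : Fin (n+1) → ℤ × ℤ) (g : ℤ × ℤ → ℤ)
    (h0 : g (v 0) = 0) (hl : g (v (Fin.last n)) = 0)
    (hadd : ∀ a b : ℤ × ℤ, g (a - b) = g a - g b)
    (hpm : ∀ i : Fin n, g (v i.succ - v i.castSucc) = 1 ∨ g (v i.succ - v i.castSucc) = -1) :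
    2 * (Finset.univ.filter (fun i : Fin n => g (v i.succ - v i.castSucc) = 1)).card = n := by
  classical
  have hsum : ∑ i : Fin n, g (v i.succ - v i.castSucc) = 0 := by
    have := telescope n (fun j => g (v j))
    simp only [hadd] at *
    rw [this, h0, hl, sub_zero]
  set P : Fin n → Prop := fun i => g (v i.succ - v i.castSucc) = 1 with hP
  show 2 * (Finset.univ.filter P).card = n
  have hsplit := Finset.sum_filter_add_sum_filter_not Finset.univ P
    (fun i => g (v i.succ - v i.castSucc))
  have h1 : ∑ i ∈ Finset.univ.filter P, g (v i.succ - v i.castSucc)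
      = (Finset.univ.filter P).card • (1:ℤ) := by
    rw [← Finset.sum_const]
    exact Finset.sum_congr rfl (fun i hi => (Finset.mem_filter.mp hi).2)
  have h2 : ∑ i ∈ Finset.univ.filter (fun i => ¬ P i), g (v i.succ - v i.castSucc)
      = (Finset.univ.filter (fun i => ¬ P i)).card • (-1:ℤ) := by
    rw [← Finset.sum_const]
    refine Finset.sum_congr rfl (fun i hi => ?_)
    have := (Finset.mem_filter.mp hi).2
    rcases hpm i with h | h
    · exact absurd h this
    · exact h
  have hc := Finset.card_filter_add_card_filter_not (s := Finset.univ) P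
  simp only [Finset.card_univ, Fintype.card_fin] at hc
  rw [h1, h2] at hsplit
  rw [hsum] at hsplit
  simp only [nsmul_eq_mul, mul_one, mul_neg_one] at hsplit
  omega

lemma W_even_le : W (2*m) ((0,0) : ℤ × ℤ) ≤ (Nat.centralBinom m)^2 := by
  classical
  set n := 2*m with hn
  set S : Set (Fin (n+1) → ℤ×ℤ) := {v | v 0 = (0,0) ∧ v (Fin.last n) = (0,0) ∧
    ∀ i : Fin n, gnorm (v i.succ - v i.castSucc) = 1} with hS
  have hWS : W n ((0,0)) = S.ncard := rfl
  rw [hWS, ← Nat.card_coe_set_eq]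
  -- the target type
  set β := ({s : Finset (Fin n) // s.card = m} × {s : Finset (Fin n) // s.card = m}) with hβ
  have hcardβ : Nat.card β = (Nat.centralBinom m)^2 := by
    rw [Nat.card_eq_fintype_card, Fintype.card_prod, Fintype.card_finset_len,
      Fintype.card_fin, Nat.centralBinom, sq, hn]
  rw [← hcardβ]
  -- the injection
  have main : ∀ v ∈ S, ∀ (g : ℤ × ℤ → ℤ), (∀ a b : ℤ×ℤ, g (a-b) = g a - g b) → g (0,0) = 0 →
      (∀ s : ℤ×ℤ, gnorm s = 1 → g s = 1 ∨ g s = -1) →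
      (Finset.univ.filter (fun i : Fin n => g (v i.succ - v i.castSucc) = 1)).card = m := by
    intro v hv g hadd h0 hpm
    obtain ⟨hv0, hvl, hvs⟩ := hv
    have := card_filter_eq n v g (by rw [hv0, h0]) (by rw [hvl, h0]) hadd
      (fun i => hpm _ (hvs i))
    omega
  set g1 : ℤ×ℤ → ℤ := fun s => s.1 + s.2 with hg1
  set g2 : ℤ×ℤ → ℤ := fun s => s.1 - s.2 with hg2
  have hadd1 : ∀ a b : ℤ×ℤ, g1 (a-b) = g1 a - g1 b := by intro a b; simp [hg1]; ring
  have hadd2 : ∀ a b : ℤ×ℤ, g2 (a-b) = g2 a - g2 b := by intro a b; simp [hg2]; ring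
  have hpm1 : ∀ s : ℤ×ℤ, gnorm s = 1 → g1 s = 1 ∨ g1 s = -1 :=
    fun s hs => ((gnorm_one_iff s).mp hs).1
  have hpm2 : ∀ s : ℤ×ℤ, gnorm s = 1 → g2 s = 1 ∨ g2 s = -1 :=
    fun s hs => ((gnorm_one_iff s).mp hs).2
  let F : S → β := fun v =>
    (⟨Finset.univ.filter (fun i : Fin n => g1 (v.1 i.succ - v.1 i.castSucc) = 1),
       main v.1 v.2 g1 hadd1 rfl hpm1⟩,
     ⟨Finset.univ.filter (fun i : Fin n => g2 (v.1 i.succ - v.1 i.castSucc) = 1),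
       main v.1 v.2 g2 hadd2 rfl hpm2⟩)
  refine Nat.card_le_card_of_injective F ?_
  rintro ⟨v, hv⟩ ⟨w, hw⟩ hFeq
  have hA : Finset.univ.filter (fun i : Fin n => g1 (v i.succ - v i.castSucc) = 1)
      = Finset.univ.filter (fun i : Fin n => g1 (w i.succ - w i.castSucc) = 1) :=
    congrArg (fun p : β => p.1.1) hFeq
  have hB : Finset.univ.filter (fun i : Fin n => g2 (v i.succ - v i.castSucc) = 1)
      = Finset.univ.filter (fun i : Fin n => g2 (w i.succ - w i.castSucc) = 1) :=
    congrArg (fun p : β => p.2.1) hFeq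
  have hstep : ∀ i : Fin n, v i.succ - v i.castSucc = w i.succ - w i.castSucc := by
    intro i
    have hAi : g1 (v i.succ - v i.castSucc) = 1 ↔ g1 (w i.succ - w i.castSucc) = 1 := by
      constructor <;> intro h
      · have := Finset.mem_filter.mp (hA ▸ Finset.mem_filter.mpr ⟨Finset.mem_univ i, h⟩)
        exact this.2
      · have := Finset.mem_filter.mp (hA.symm ▸ Finset.mem_filter.mpr ⟨Finset.mem_univ i, h⟩)
        exact this.2
    have hBi : g2 (v i.succ - v i.castSucc) = 1 ↔ g2 (w i.succ - w i.castSucc) = 1 := by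
      constructor <;> intro h
      · have := Finset.mem_filter.mp (hB ▸ Finset.mem_filter.mpr ⟨Finset.mem_univ i, h⟩)
        exact this.2
      · have := Finset.mem_filter.mp (hB.symm ▸ Finset.mem_filter.mpr ⟨Finset.mem_univ i, h⟩)
        exact this.2
    have hv1 := hpm1 _ (hv.2.2 i); have hw1 := hpm1 _ (hw.2.2 i)
    have hv2 := hpm2 _ (hv.2.2 i); have hw2 := hpm2 _ (hw.2.2 i)
    have e1 : g1 (v i.succ - v i.castSucc) = g1 (w i.succ - w i.castSucc) := by
      rcases hv1 with h | h <;> rcases hw1 with h' | h' <;> rw [h, h'] <;>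
        simp [h, h'] at hAi ⊢ <;> omega
    have e2 : g2 (v i.succ - v i.castSucc) = g2 (w i.succ - w i.castSucc) := by
      rcases hv2 with h | h <;> rcases hw2 with h' | h' <;> rw [h, h'] <;>
        simp [h, h'] at hBi ⊢ <;> omega
    simp only [hg1, hg2] at e1 e2
    exact Prod.ext (by omega) (by omega)
  have hall : ∀ k : ℕ, ∀ hk : k < n+1, v ⟨k, hk⟩ = w ⟨k, hk⟩ := by
    intro k
    induction k with
    | zero => intro hk; exact hv.1.trans hw.1.symm
    | succ k ih =>
      intro hk
      have hkn : k < n := by omega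
      have hs := hstep ⟨k, hkn⟩
      have hsucc : (⟨k, hkn⟩ : Fin n).succ = ⟨k+1, hk⟩ := rfl
      have hcast : (⟨k, hkn⟩ : Fin n).castSucc = ⟨k, by omega⟩ := rfl
      rw [hsucc, hcast] at hs
      have ihk := ih (by omega)
      have : v ⟨k+1, hk⟩ = (v ⟨k+1, hk⟩ - v ⟨k, by omega⟩) + v ⟨k, by omega⟩ := by abel
      rw [this, hs, ihk]
      abel
  apply Subtype.ext
  funext j
  have := hall j.1 j.2
  simpa using this

end count

lemma cb_sq_le (m : ℕ) : (m+1) * (Nat.centralBinom m)^2 ≤ 16^m := by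
  induction m with
  | zero => simp [Nat.centralBinom]
  | succ m ih =>
    have key := Nat.succ_mul_centralBinom_succ m
    refine Nat.le_of_mul_le_mul_left ?_ (show 0 < (m+1)^2 by positivity)
    calc (m+1)^2 * ((m+1+1) * Nat.centralBinom (m+1)^2)
        = (m+2) * ((m+1) * Nat.centralBinom (m+1))^2 := by ring
      _ = (m+2) * (2*(2*m+1) * Nat.centralBinom m)^2 := by rw [key]
      _ = ((m+2) * (2*(2*m+1))^2) * (Nat.centralBinom m)^2 := by ring
      _ ≤ (16*(m+1)^2) * ((m+1) * (Nat.centralBinom m)^2) := by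
          have : (m+2) * (2*(2*m+1))^2 ≤ 16*(m+1)^2*(m+1) := by nlinarith
          calc ((m+2) * (2*(2*m+1))^2) * (Nat.centralBinom m)^2
              ≤ (16*(m+1)^2*(m+1)) * (Nat.centralBinom m)^2 :=
                Nat.mul_le_mul_right _ this
            _ = (16*(m+1)^2) * ((m+1) * (Nat.centralBinom m)^2) := by ring
      _ ≤ (16*(m+1)^2) * 16^m := Nat.mul_le_mul_left _ ih
      _ = (m+1)^2 * 16^(m+1) := by ring

lemma W_real_le (m : ℕ) : (W (2*m) ((0,0) : ℤ × ℤ) : ℝ) ≤ 16^m / (m+1) := by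
  have h1 : (W (2*m) ((0,0)) : ℝ) ≤ ((Nat.centralBinom m)^2 : ℕ) := by
    exact_mod_cast W_even_le m
  have h2 : (((Nat.centralBinom m)^2 : ℕ) : ℝ) ≤ 16^m / (m+1) := by
    rw [le_div_iff₀ (by positivity)]
    have := cb_sq_le m
    have : ((m+1) * (Nat.centralBinom m)^2 : ℕ) ≤ ((16:ℕ)^m : ℕ) := this
    calc ((Nat.centralBinom m ^2 : ℕ):ℝ) * (↑m+1) = (((m+1) * (Nat.centralBinom m)^2 : ℕ) : ℝ) := by
          push_cast; ring
      _ ≤ (((16:ℕ)^m : ℕ) : ℝ) := by exact_mod_cast this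
      _ = 16^m := by push_cast; ring
  exact h1.trans h2

theorem stmt7 (κ : ℝ) (hκ : 0 < κ) (hκ' : κ < 1) (N : ℕ) (hN : 1 ≤ N)
    (hNκ : (1 : ℝ) / 2 ≤ N * κ) :
    (∑' n : ℕ, (1 / (4 + κ)) ^ (2 * (N + 1 + n)) * (W (2 * (N + 1 + n)) (0, 0) : ℝ))
      ≤ 4 * Real.exp (-(N * κ) / 4) := by
  have h4 : (0:ℝ) < 4 + κ := by linarith
  set q : ℝ := 4 / (4+κ) with hq
  have hq0 : 0 < q := by positivity
  have hq1 : q < 1 := by rw [hq, div_lt_one h4]; linarith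
  set r : ℝ := q^2 with hr
  have hr0 : 0 ≤ r := by positivity
  have hr1 : r < 1 := by
    rw [hr]; nlinarith
  set c : ℝ := (1/((N:ℝ)+2)) * r^(N+1) with hc
  have hterm : ∀ n : ℕ, (1/(4+κ))^(2*(N+1+n)) * (W (2*(N+1+n)) (0,0) : ℝ) ≤ c * r^n := by
    intro n
    have h1 := W_real_le (N+1+n)
    have hpos : (0:ℝ) < (1/(4+κ))^(2*(N+1+n)) := by positivity
    calc (1/(4+κ))^(2*(N+1+n)) * (W (2*(N+1+n)) (0,0) : ℝ)
        ≤ (1/(4+κ))^(2*(N+1+n)) * (16^(N+1+n) / ((N:ℝ)+1+n+1)) := by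
          apply mul_le_mul_of_nonneg_left _ hpos.le
          refine h1.trans (le_of_eq ?_); push_cast; ring
      _ = r^(N+1+n) / ((N:ℝ)+1+n+1) := by
          rw [hr, hq, pow_mul, ← mul_div_assoc, ← mul_pow]
          congr 1
          rw [div_pow, div_pow, div_mul_eq_mul_div]
          norm_num
      _ ≤ r^(N+1+n) / ((N:ℝ)+2) := by
          apply div_le_div_of_nonneg_left (by positivity) (by positivity)
          push_cast; linarith [Nat.cast_nonneg (α := ℝ) n]
      _ = c * r^n := by rw [hc, pow_add]; ring
  have hg : Summable (fun n : ℕ => c * r^n) := (summable_geometric_of_lt_one hr0 hr1).mul_left c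
  have hf : Summable (fun n : ℕ => (1/(4+κ))^(2*(N+1+n)) * (W (2*(N+1+n)) (0,0) : ℝ)) := by
    apply Summable.of_nonneg_of_le (fun n => by positivity) hterm hg
  have hts : (∑' n : ℕ, (1/(4+κ))^(2*(N+1+n)) * (W (2*(N+1+n)) (0,0) : ℝ))
      ≤ ∑' n : ℕ, c * r^n := Summable.tsum_le_tsum hterm hf hg
  rw [tsum_mul_left, tsum_geometric_of_lt_one hr0 hr1] at hts
  refine hts.trans ?_
  -- final numeric bound
  have hA : r^(N+1) ≤ Real.exp (-(N*κ)/4) := by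
    have hy : (0:ℝ) < (4+κ)/4 := by linarith
    have hlog : κ/5 ≤ Real.log ((4+κ)/4) := by
      have h := Real.log_le_sub_one_of_pos hq0
      have : Real.log ((4+κ)/4) = - Real.log q := by
        rw [← Real.log_inv]; congr 1; rw [hq]; field_simp
      rw [this]
      have hsub : q - 1 = -(κ/(4+κ)) := by rw [hq]; field_simp; ring
      have h2 : Real.log q ≤ -(κ/(4+κ)) := by rw [← hsub]; exact h
      have h3 : κ/5 ≤ κ/(4+κ) := by
        rw [div_le_div_iff₀ (by norm_num) h4]; nlinarith
      linarith
    have hexp : Real.exp ((N:ℝ)*κ/4) ≤ ((4+κ)/4)^(2*N+2) := by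
      have h1 : (N:ℝ)*κ/4 ≤ (2*N+2) * (κ/5) := by
        have hN0 : (0:ℝ) ≤ N := Nat.cast_nonneg N
        nlinarith
      have h2 : (N:ℝ)*κ/4 ≤ (2*N+2 : ℕ) * Real.log ((4+κ)/4) := by
        push_cast
        calc (N:ℝ)*κ/4 ≤ (2*N+2) * (κ/5) := h1
          _ ≤ (2*(N:ℝ)+2) * Real.log ((4+κ)/4) := by
              apply mul_le_mul_of_nonneg_left hlog (by positivity)
      calc Real.exp ((N:ℝ)*κ/4) ≤ Real.exp ((2*N+2 : ℕ) * Real.log ((4+κ)/4)) :=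
            Real.exp_le_exp.mpr h2
        _ = ((4+κ)/4)^(2*N+2) := by
            rw [← Real.log_pow, Real.exp_log (by positivity)]
    have hqy : q = (((4+κ)/4))⁻¹ := by rw [hq]; field_simp
    have : r^(N+1) = (((4+κ)/4)^(2*N+2))⁻¹ := by
      rw [hr, hqy, ← pow_mul, inv_pow, show 2*(N+1) = 2*N+2 from by ring]
    rw [this]
    rw [show -((N:ℝ)*κ)/4 = -((N:ℝ)*κ/4) by ring, Real.exp_neg]
    exact inv_anti₀ (Real.exp_pos _) hexp
  have hB : (1/((N:ℝ)+2)) * (1-r)⁻¹ ≤ 4 := by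
    have h1r : 1 - r = (κ^2+8*κ)/(4+κ)^2 := by
      rw [hr, hq]; field_simp; ring
    rw [h1r, inv_div]
    rw [show (1/((N:ℝ)+2)) * ((4+κ)^2/(κ^2+8*κ)) = (4+κ)^2/(((N:ℝ)+2)*(κ^2+8*κ)) by
      field_simp]
    rw [div_le_iff₀ (by positivity)]
    nlinarith [hNκ, hκ, sq_nonneg κ, Nat.cast_nonneg (α := ℝ) N,
      mul_nonneg (Nat.cast_nonneg (α := ℝ) N) (sq_nonneg κ)]
  calc c * (1-r)⁻¹ = ((1/((N:ℝ)+2)) * (1-r)⁻¹) * r^(N+1) := by rw [hc]; ring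
    _ ≤ 4 * Real.exp (-((N:ℝ)*κ)/4) := by
        apply mul_le_mul hB hA (by positivity) (by norm_num)
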